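/- If (x,y) is feasible for MFNLP, then the knapsack-cover inequalities hold: for every subset A ⊆ F with Σ_{i∈A} U_i ≤ |D|, one has Σ_{i∈F\A} min(U_i, |D| − Σ_{i∈A} U_i)·y_i ≥ |D| − Σ_{i∈A} U_i. -/

import Mathlib

/-!
Formalization of statements from "An LP-rounding approach to capacitated facility location".

`F` is the (finite) type of facilities, `D` the type of clients, `U i` the (positive integer)
capacity of facility `i`.  The multi-commodity flow network `MFN(g, x, y)` has nodes
`j^s, j^t` for clients `j` and `i, i'` for facilities `i`; its arcs and capacities are as in
`MFNArc` / `mfnCap` below.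
-/

open scoped BigOperators Classical

/-- Arcs of the multi-commodity flow network `MFN`:
`mid i` is the arc `(i, i')`, `sx j i` is `(j^s, i)`, `gs i j` is `(i, j^s)`,
and `ft i j` is `(i', j^t)`. -/
inductive MFNArc (F D : Type) where
  | mid : F → MFNArc F D
  | sx  : D → F → MFNArc F D
  | gs  : F → D → MFNArc F D
  | ft  : F → D → MFNArc F D
  deriving DecidableEq, Fintype

/-- Nodes of the multi-commodity flow network `MFN`. -/
inductive MFNNode (F D : Type) where
  | src  : D → MFNNode F D
  | fac  : F → MFNNode F D
  | fac' : F → MFNNode F D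
  | sink : D → MFNNode F D
  deriving DecidableEq

variable {F D : Type}

/-- Tail (start node) of an arc. -/
def MFNArc.tail : MFNArc F D → MFNNode F D
  | .mid i => .fac i
  | .sx j _ => .src j
  | .gs i _ => .fac i
  | .ft i _ => .fac' i

/-- Head (end node) of an arc. -/
def MFNArc.head : MFNArc F D → MFNNode F D
  | .mid i => .fac' i
  | .sx _ i => .fac i
  | .gs _ j => .src j
  | .ft _ j => .sink j

variable [Fintype F] [Fintype D]

/-- Capacity of each arc of `MFN(g, x, y)`; the demand of client `j` is
`d j = 1 - ∑ i, g i j`. -/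
noncomputable def mfnCap (U : F → ℕ) (g x : F → D → ℝ) (y : F → ℝ) : MFNArc F D → ℝ
  | .mid i  => y i * ((U i : ℝ) - ∑ j, g i j)
  | .sx j i => x i j
  | .gs i j => g i j
  | .ft i j => y i * (1 - ∑ i', g i' j)

/-- Net outflow of a (single-commodity) flow `f` at node `v`. -/
noncomputable def netOutflow (f : MFNArc F D → ℝ) (v : MFNNode F D) : ℝ :=
  ∑ a ∈ Finset.univ.filter (fun a : MFNArc F D => a.tail = v), f a -
    ∑ a ∈ Finset.univ.filter (fun a : MFNArc F D => a.head = v), f a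

/-- `f = (f_j)_{j ∈ D}` is a feasible multi-commodity flow for `MFN(g, x, y)`:
each `f_j` is nonnegative, conserves flow at every node other than `j^s` and `j^t`,
has net outflow `d j = 1 - ∑ i, g i j` at `j^s`, and the total flow on every arc is
at most its capacity. -/
def IsFeasibleFlow (U : F → ℕ) (g x : F → D → ℝ) (y : F → ℝ)
    (f : D → MFNArc F D → ℝ) : Prop :=
  (∀ j a, 0 ≤ f j a) ∧
  (∀ (j : D) (v : MFNNode F D), v ≠ MFNNode.src j → v ≠ MFNNode.sink j →
      netOutflow (f j) v = 0) ∧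
  (∀ j : D, netOutflow (f j) (MFNNode.src j) = 1 - ∑ i, g i j) ∧
  (∀ a : MFNArc F D, ∑ j, f j a ≤ mfnCap U g x y a)

/-- The multi-commodity flow network `MFN(g, x, y)` is feasible. -/
def MFNFeasible (U : F → ℕ) (g x : F → D → ℝ) (y : F → ℝ) : Prop :=
  ∃ f : D → MFNArc F D → ℝ, IsFeasibleFlow U g x y f

/-- `g` is a valid partial (fractional) assignment of clients to facilities. -/
def ValidAssign (U : F → ℕ) (g : F → D → ℝ) : Prop :=
  (∀ i j, 0 ≤ g i j) ∧ (∀ j, ∑ i, g i j ≤ 1) ∧ (∀ i, ∑ j, g i j ≤ (U i : ℝ))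

/-- Enumeration equivalence for arcs. -/
def arcEquiv : (F ⊕ (D × F) ⊕ (F × D) ⊕ (F × D)) ≃ MFNArc F D where
  toFun := fun s => match s with
    | .inl i => .mid i
    | .inr (.inl (j, i)) => .sx j i
    | .inr (.inr (.inl (i, j))) => .gs i j
    | .inr (.inr (.inr (i, j))) => .ft i j
  invFun := fun a => match a with
    | .mid i => .inl i
    | .sx j i => .inr (.inl (j, i))
    | .gs i j => .inr (.inr (.inl (i, j)))
    | .ft i j => .inr (.inr (.inr (i, j)))
  left_inv := by rintro (i | ⟨j, i⟩ | ⟨i, j⟩ | ⟨i, j⟩) <;> rfl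
  right_inv := by rintro (i | ⟨j, i⟩ | ⟨i, j⟩ | ⟨i, j⟩) <;> rfl

lemma sum_arc (h : MFNArc F D → ℝ) :
    ∑ a, h a = (∑ i, h (.mid i)) + (∑ j, ∑ i, h (.sx j i)) +
      (∑ i, ∑ j, h (.gs i j)) + (∑ i, ∑ j, h (.ft i j)) := by
  rw [← Equiv.sum_comp (arcEquiv (F := F) (D := D)) h]
  simp [Fintype.sum_sum_type, Fintype.sum_prod_type, arcEquiv, add_assoc]

lemma netOutflow_src (f : MFNArc F D → ℝ) (j : D) :
    netOutflow f (.src j) = ∑ i, f (.sx j i) - ∑ i, f (.gs i j) := by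
  unfold netOutflow
  rw [Finset.sum_filter, Finset.sum_filter, sum_arc, sum_arc]
  simp [MFNArc.tail, MFNArc.head]

lemma netOutflow_fac (f : MFNArc F D → ℝ) (i : F) :
    netOutflow f (.fac i) = (f (.mid i) + ∑ j, f (.gs i j)) - ∑ j, f (.sx j i) := by
  unfold netOutflow
  rw [Finset.sum_filter, Finset.sum_filter, sum_arc, sum_arc]
  simp [MFNArc.tail, MFNArc.head]

lemma netOutflow_fac' (f : MFNArc F D → ℝ) (i : F) :
    netOutflow f (.fac' i) = (∑ j, f (.ft i j)) - f (.mid i) := by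
  unfold netOutflow
  rw [Finset.sum_filter, Finset.sum_filter, sum_arc, sum_arc]
  simp [MFNArc.tail, MFNArc.head]

lemma netOutflow_sink (f : MFNArc F D → ℝ) (j : D) :
    netOutflow f (.sink j) = - ∑ i, f (.ft i j) := by
  unfold netOutflow
  rw [Finset.sum_filter, Finset.sum_filter, sum_arc, sum_arc]
  simp [MFNArc.tail, MFNArc.head]

lemma netOutflow_total (f : MFNArc F D → ℝ) :
    (∑ j, netOutflow f (.src j)) + (∑ i, netOutflow f (.fac i)) +
      (∑ i, netOutflow f (.fac' i)) + (∑ j, netOutflow f (.sink j)) = 0 := by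
  simp only [netOutflow_src, netOutflow_fac, netOutflow_fac', netOutflow_sink,
    Finset.sum_sub_distrib, Finset.sum_add_distrib, Finset.sum_neg_distrib]
  rw [Finset.sum_comm (f := fun j i => f (.sx j i)),
    Finset.sum_comm (f := fun i j => f (.gs i j)) (s := Finset.univ),
    Finset.sum_comm (f := fun i j => f (.ft i j)) (s := Finset.univ)]
  ring

example : True := trivial

lemma sink_flow (U : F → ℕ) (g x : F → D → ℝ) (y : F → ℝ) (f : D → MFNArc F D → ℝ)
    (hf : IsFeasibleFlow U g x y f) (j : D) :
    ∑ j', ∑ i, f j' (.ft i j) = 1 - ∑ i, g i j := by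
  obtain ⟨hpos, hcons, hsrc, hcap⟩ := hf
  have hzero : ∀ j', j' ≠ j → ∑ i, f j' (.ft i j) = 0 := by
    intro j' hj'
    have h := hcons j' (.sink j) (by simp) (by simp [Ne.symm hj'])
    rw [netOutflow_sink] at h; linarith
  have hj : ∑ i, f j (.ft i j) = 1 - ∑ i, g i j := by
    have htot := netOutflow_total (f j)
    have h1 : ∑ j'' : D, netOutflow (f j) (.src j'') = 1 - ∑ i, g i j := by
      rw [Finset.sum_eq_single j (fun j'' _ h => hcons j (.src j'') (by simp [h]) (by simp))
        (by simp)]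
      exact hsrc j
    have h2 : ∑ i : F, netOutflow (f j) (.fac i) = 0 :=
      Finset.sum_eq_zero fun i _ => hcons j _ (by simp) (by simp)
    have h3 : ∑ i : F, netOutflow (f j) (.fac' i) = 0 :=
      Finset.sum_eq_zero fun i _ => hcons j _ (by simp) (by simp)
    have h4 : ∑ j'' : D, netOutflow (f j) (.sink j'') = netOutflow (f j) (.sink j) := by
      rw [Finset.sum_eq_single j (fun j'' _ h => hcons j (.sink j'') (by simp) (by simp [h]))
        (by simp)]
    rw [h1, h2, h3, h4, netOutflow_sink] at htot
    linarith
  rw [Finset.sum_eq_single j (fun j' _ h => hzero j' h) (by simp)]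
  exact hj

/-- Feasibility for MFNLP implies all knapsack-cover inequalities. -/
theorem stmt_5 (U : F → ℕ) (hU : ∀ i, 0 < U i)
    (x : F → D → ℝ) (y : F → ℝ)
    (hx : ∀ i j, 0 ≤ x i j ∧ x i j ≤ 1) (hy : ∀ i, 0 ≤ y i ∧ y i ≤ 1)
    (hfeas : ∀ g : F → D → ℝ, ValidAssign U g → MFNFeasible U g x y)
    (A : Finset F) (hA : ∑ i ∈ A, U i ≤ Fintype.card D) :
    (Fintype.card D : ℝ) - ∑ i ∈ A, (U i : ℝ) ≤
      ∑ i ∈ Finset.univ \ A,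
        min (U i : ℝ) ((Fintype.card D : ℝ) - ∑ i' ∈ A, (U i' : ℝ)) * y i := by
  by_cases hD : Fintype.card D = 0
  · have hA0 : A = ∅ := by
      by_contra h
      obtain ⟨i, hi⟩ := Finset.nonempty_iff_ne_empty.2 h
      have h1 : 0 < ∑ i ∈ A, U i := Finset.sum_pos' (fun _ _ => Nat.zero_le _) ⟨i, hi, hU i⟩
      omega
    subst hA0
    simp only [Finset.sum_empty, sub_zero, hD, Nat.cast_zero]
    have hz : ∀ i ∈ Finset.univ \ (∅ : Finset F), min ((U i : ℝ)) 0 * y i = 0 := by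
      intro i _
      rw [min_eq_right (by positivity)]
      ring
    rw [Finset.sum_congr rfl hz]
    simp
  -- main case
  set N : ℝ := (Fintype.card D : ℝ) with hNdef
  set SA : ℝ := ∑ i ∈ A, (U i : ℝ) with hSAdef
  have hN : (0 : ℝ) < N := by
    rw [hNdef]
    exact_mod_cast Nat.pos_of_ne_zero hD
  have hSA_nonneg : 0 ≤ SA := Finset.sum_nonneg fun i _ => by positivity
  have hSA_le : SA ≤ N := by
    rw [hSAdef, hNdef, ← Nat.cast_sum]
    exact_mod_cast hA
  set g : F → D → ℝ := fun i j => if i ∈ A then (U i : ℝ) / N else 0 with hgdef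
  have hcol : ∀ j : D, ∑ i, g i j = SA / N := by
    intro j
    rw [hgdef]
    simp only [Finset.sum_ite_mem, Finset.univ_inter]
    rw [hSAdef, Finset.sum_div]
  have hrow : ∀ i ∈ A, ∑ j : D, g i j = (U i : ℝ) := by
    intro i hi
    rw [hgdef]
    simp only [hi, if_true, Finset.sum_const, Finset.card_univ, nsmul_eq_mul]
    field_simp
    rw [hNdef, mul_comm]
  have hrow0 : ∀ i ∉ A, ∑ j : D, g i j = 0 := by
    intro i hi
    rw [hgdef]
    simp [hi]
  have hvalid : ValidAssign U g := by
    refine ⟨fun i j => ?_, fun j => ?_, fun i => ?_⟩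
    · rw [hgdef]; dsimp only; split
      · positivity
      · exact le_refl 0
    · rw [hcol j]; exact div_le_one_of_le₀ hSA_le hN.le
    · by_cases hi : i ∈ A
      · rw [hrow i hi]
      · rw [hrow0 i hi]; positivity
  obtain ⟨f, hf⟩ := hfeas g hvalid
  obtain ⟨hpos, hcons, hsrc, hcap⟩ := hf
  set S : F → ℝ := fun i => ∑ j : D, ∑ j' : D, f j' (.ft i j) with hSdef
  have hStot : ∑ i, S i = N - SA := by
    have h1 : ∀ j : D, ∑ i : F, ∑ j' : D, f j' (.ft i j) = 1 - SA / N := by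
      intro j
      rw [Finset.sum_comm, sink_flow U g x y f ⟨hpos, hcons, hsrc, hcap⟩ j, hcol j]
    calc ∑ i, S i = ∑ j : D, ∑ i : F, ∑ j' : D, f j' (.ft i j) := Finset.sum_comm
      _ = ∑ _j : D, (1 - SA / N) := Finset.sum_congr rfl fun j _ => h1 j
      _ = N * (1 - SA / N) := by rw [Finset.sum_const, Finset.card_univ, nsmul_eq_mul]
      _ = N - SA := by field_simp
  have hScap : ∀ i, S i ≤ y i * (N - SA) := by
    intro i
    have h1 : ∀ j : D, ∑ j' : D, f j' (.ft i j) ≤ y i * (1 - SA / N) := by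
      intro j
      have := hcap (.ft i j)
      rwa [mfnCap, hcol j] at this
    calc S i ≤ ∑ _j : D, y i * (1 - SA / N) := Finset.sum_le_sum fun j _ => h1 j
      _ = N * (y i * (1 - SA / N)) := by rw [Finset.sum_const, Finset.card_univ, nsmul_eq_mul]
      _ = y i * (N - SA) := by field_simp
  have hSmid : ∀ i, S i ≤ y i * ((U i : ℝ) - ∑ j, g i j) := by
    intro i
    have h1 : ∀ j' : D, ∑ j : D, f j' (.ft i j) = f j' (.mid i) := by
      intro j'
      have h := hcons j' (.fac' i) (by simp) (by simp)
      rw [netOutflow_fac'] at h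
      linarith
    have h2 : S i = ∑ j' : D, f j' (.mid i) := by
      rw [hSdef]
      exact (Finset.sum_comm).trans (Finset.sum_congr rfl fun j' _ => h1 j')
    rw [h2]
    exact hcap (.mid i)
  have hSpos : ∀ i, 0 ≤ S i := fun i =>
    Finset.sum_nonneg fun j _ => Finset.sum_nonneg fun j' _ => hpos j' _
  have hAzero : ∀ i ∈ A, S i ≤ 0 := by
    intro i hi
    have := hSmid i
    rw [hrow i hi] at this
    simpa using this
  have hmin : ∀ i ∈ Finset.univ \ A, S i ≤ min (U i : ℝ) (N - SA) * y i := by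
    intro i hi
    have hiA : i ∉ A := (Finset.mem_sdiff.1 hi).2
    have hU' : S i ≤ y i * (U i : ℝ) := by
      have := hSmid i
      rwa [hrow0 i hiA, sub_zero] at this
    rcases le_total (U i : ℝ) (N - SA) with h | h
    · rw [min_eq_left h]; linarith [hU']
    · rw [min_eq_right h]; linarith [hScap i]
  calc N - SA = ∑ i, S i := hStot.symm
    _ = ∑ i ∈ Finset.univ \ A, S i + ∑ i ∈ A, S i :=
        (Finset.sum_sdiff (Finset.subset_univ A)).symm
    _ ≤ ∑ i ∈ Finset.univ \ A, min (U i : ℝ) (N - SA) * y i + 0 :=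
        add_le_add (Finset.sum_le_sum hmin) (Finset.sum_nonpos hAzero)
    _ = ∑ i ∈ Finset.univ \ A, min (U i : ℝ) (N - SA) * y i := add_zero _
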